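/- Let ρ : ℂ → ℝ be 1-Lipschitz, α ≥ 0, ε = N^{-1/2}, and P_N the Bargmann projection with kernel N e^{N(x z̄ − |x|²/2 − |z|²/2)}. Then the conjugated operator P_N^α := e^{αρ/ε} P_N e^{-αρ/ε} has kernel bounded by |P_N^α(x,z)| ≤ e^{α²} N e^{-N|x−z|²/4}, and ‖P_N^α − P_N‖ ≤ C α e^{α²} for a universal constant C. -/

import Mathlib

open MeasureTheory
open scoped ComplexConjugate ENNReal

/-- The measure `γ` on `ℂ` with `dγ(z) = π⁻¹ d²z`. -/
noncomputable def gammaMeasure : Measure ℂ := ENNReal.ofReal (1 / Real.pi) • (volume : Measure ℂ)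

/-- The Bargmann kernel `P_N(x,z) = N e^{N(x z̄ − |x|²/2 − |z|²/2)}`. -/
noncomputable def bargmannKernel (N : ℝ) (x z : ℂ) : ℂ :=
  (N : ℂ) * Complex.exp ((N : ℂ) * (x * conj z - (‖x‖ : ℂ) ^ 2 / 2 - (‖z‖ : ℂ) ^ 2 / 2))


lemma norm_bargmannKernel {N : ℝ} (hN : 0 ≤ N) (x z : ℂ) :
    ‖bargmannKernel N x z‖ = N * Real.exp (-(N * ‖x - z‖ ^ 2) / 2) := by
  have hsq : ∀ w : ℂ, ‖w‖ ^ 2 = w.re ^ 2 + w.im ^ 2 := by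
    intro w
    rw [Complex.sq_norm, Complex.normSq_apply]; ring
  have hre : ((N : ℂ) * (x * conj z - (‖x‖ : ℂ) ^ 2 / 2 - (‖z‖ : ℂ) ^ 2 / 2)).re
      = -(N * ‖x - z‖ ^ 2) / 2 := by
    have h1 := hsq x
    have h2 := hsq z
    have h3 := hsq (x - z)
    simp only [Complex.sub_re, Complex.sub_im] at h3
    have : ((N : ℂ) * (x * conj z - (‖x‖ : ℂ) ^ 2 / 2 - (‖z‖ : ℂ) ^ 2 / 2))
        = (N : ℂ) * (x * conj z - ((‖x‖ ^ 2 / 2 : ℝ) : ℂ) - ((‖z‖ ^ 2 / 2 : ℝ) : ℂ)) := by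
      push_cast; ring
    rw [this]
    simp only [Complex.mul_re, Complex.sub_re, Complex.ofReal_re, Complex.ofReal_im,
      Complex.mul_im, Complex.sub_im, Complex.conj_re, Complex.conj_im]
    rw [h1, h2, h3]; ring
  unfold bargmannKernel
  rw [norm_mul, Complex.norm_exp, hre,
    Complex.norm_real, Real.norm_of_nonneg hN]


lemma lintegral_gaussian_real {b : ℝ} (hb : 0 < b) :
    ∫⁻ x : ℝ, ENNReal.ofReal (Real.exp (-b * x ^ 2)) = ENNReal.ofReal (Real.sqrt (Real.pi / b)) := by
  rw [← ofReal_integral_eq_lintegral_ofReal (integrable_exp_neg_mul_sq hb)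
    (Filter.Eventually.of_forall fun x => Real.exp_nonneg _), integral_gaussian]

lemma lintegral_gaussian_complex {b : ℝ} (hb : 0 < b) :
    ∫⁻ z : ℂ, ENNReal.ofReal (Real.exp (-b * ‖z‖ ^ 2)) = ENNReal.ofReal (Real.pi / b) := by
  have key : ∫⁻ p : ℝ × ℝ,
        ENNReal.ofReal (Real.exp (-b * ‖Complex.measurableEquivRealProd.symm p‖ ^ 2))
      = ∫⁻ z : ℂ, ENNReal.ofReal (Real.exp (-b * ‖z‖ ^ 2)) := by
    exact (Complex.volume_preserving_equiv_real_prod.symm).lintegral_comp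
      (f := fun z : ℂ => ENNReal.ofReal (Real.exp (-b * ‖z‖ ^ 2)))
      (Measurable.ennreal_ofReal (by fun_prop))
  rw [← key]
  have hnorm : ∀ p : ℝ × ℝ,
      ENNReal.ofReal (Real.exp (-b * ‖Complex.measurableEquivRealProd.symm p‖ ^ 2))
      = ENNReal.ofReal (Real.exp (-b * p.1 ^ 2)) * ENNReal.ofReal (Real.exp (-b * p.2 ^ 2)) := by
    intro p
    have h2 : ‖Complex.measurableEquivRealProd.symm p‖ ^ 2 = p.1 ^ 2 + p.2 ^ 2 := by
      rw [Complex.measurableEquivRealProd_symm_apply, Complex.sq_norm,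
        Complex.normSq_apply]
      simp; ring
    rw [h2, ← ENNReal.ofReal_mul (Real.exp_nonneg _), ← Real.exp_add]
    ring_nf
  simp_rw [hnorm]
  rw [Measure.volume_eq_prod, lintegral_prod_mul (f := fun a : ℝ => ENNReal.ofReal (Real.exp (-b * a ^ 2)))
    (g := fun a : ℝ => ENNReal.ofReal (Real.exp (-b * a ^ 2))) (by fun_prop) (by fun_prop), lintegral_gaussian_real hb, ← ENNReal.ofReal_mul (Real.sqrt_nonneg _),
    Real.mul_self_sqrt (le_of_lt (div_pos Real.pi_pos hb))]


lemma row_bound {N : ℝ} (hN : 1 ≤ N) (x : ℂ) :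
    ∫⁻ z : ℂ, ENNReal.ofReal (2 * N * Real.exp (-(N * ‖x - z‖ ^ 2) / 8)) ∂gammaMeasure
      = ENNReal.ofReal 16 := by
  have hN0 : (0 : ℝ) < N := lt_of_lt_of_le one_pos hN
  rw [gammaMeasure, lintegral_smul_measure]
  have htrans : ∫⁻ z : ℂ, ENNReal.ofReal (2 * N * Real.exp (-(N * ‖x - z‖ ^ 2) / 8))
      = ∫⁻ z : ℂ, ENNReal.ofReal (2 * N * Real.exp (-(N * ‖z‖ ^ 2) / 8)) := by
    exact (Measure.measurePreserving_sub_left (volume : Measure ℂ) x).lintegral_comp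
      (f := fun z : ℂ => ENNReal.ofReal (2 * N * Real.exp (-(N * ‖z‖ ^ 2) / 8)))
      (Measurable.ennreal_ofReal (by fun_prop))
  rw [htrans]
  have hsplit : ∀ z : ℂ, ENNReal.ofReal (2 * N * Real.exp (-(N * ‖z‖ ^ 2) / 8))
      = ENNReal.ofReal (2 * N) * ENNReal.ofReal (Real.exp (-(N / 8) * ‖z‖ ^ 2)) := by
    intro z
    rw [← ENNReal.ofReal_mul (by positivity)]
    ring_nf
  simp_rw [hsplit]
  rw [lintegral_const_mul _ (Measurable.ennreal_ofReal (by fun_prop)),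
    lintegral_gaussian_complex (by positivity),
    ← ENNReal.ofReal_mul (by positivity), smul_eq_mul, ← ENNReal.ofReal_mul (by positivity)]
  congr 1
  have hpi := Real.pi_pos
  field_simp
  ring


lemma abs_exp_sub_one_le' (t : ℝ) : |Real.exp t - 1| ≤ |t| * Real.exp |t| := by
  rcases le_or_gt 0 t with ht | ht
  · rw [abs_of_nonneg ht,
      abs_of_nonneg (by nlinarith [Real.one_le_exp ht] : (0:ℝ) ≤ Real.exp t - 1)]
    have h := Real.add_one_le_exp (-t)
    have hexp : Real.exp (-t) * Real.exp t = 1 := by rw [← Real.exp_add]; simp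
    nlinarith [Real.exp_pos t]
  · rw [abs_of_neg ht,
      abs_of_nonpos (by nlinarith [Real.exp_lt_one_iff.mpr ht] : Real.exp t - 1 ≤ 0)]
    have h := Real.add_one_le_exp t
    have h1 : (1:ℝ) ≤ Real.exp (-t) := Real.one_le_exp (by linarith)
    nlinarith

lemma lip_abs_le {ρ : ℂ → ℝ} (hρ : LipschitzWith 1 ρ) (x z : ℂ) : |ρ x - ρ z| ≤ ‖x - z‖ := by
  have := hρ.dist_le_mul x z
  simp only [NNReal.coe_one, one_mul] at this
  rwa [Real.dist_eq, dist_eq_norm] at this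

lemma kernel_bound_one {N : ℝ} (hN : 1 ≤ N) {ρ : ℂ → ℝ} (hρ : LipschitzWith 1 ρ)
    {α : ℝ} (hα : 0 ≤ α) (x z : ℂ) :
    ‖(Real.exp (α * (ρ x - ρ z) * Real.sqrt N) : ℂ) * bargmannKernel N x z‖
      ≤ Real.exp (α ^ 2) * N * Real.exp (-(N * ‖x - z‖ ^ 2) / 4) := by
  have hN0 : (0:ℝ) ≤ N := by linarith
  have hsN : Real.sqrt N ^ 2 = N := Real.sq_sqrt hN0
  have hsN0 : (0:ℝ) ≤ Real.sqrt N := Real.sqrt_nonneg N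
  set r := ‖x - z‖ with hr
  have hr0 : (0:ℝ) ≤ r := norm_nonneg _
  have hlip : |ρ x - ρ z| ≤ r := lip_abs_le hρ x z
  rw [norm_mul, Complex.norm_real, Real.norm_of_nonneg (Real.exp_nonneg _),
    norm_bargmannKernel hN0, ← hr]
  have key : α * (ρ x - ρ z) * Real.sqrt N ≤ α ^ 2 + N * r ^ 2 / 4 := by
    have h2 : ρ x - ρ z ≤ r := (abs_le.mp hlip).2
    have h1 : α * (ρ x - ρ z) * Real.sqrt N ≤ α * r * Real.sqrt N :=
      mul_le_mul_of_nonneg_right (mul_le_mul_of_nonneg_left h2 hα) hsN0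
    nlinarith [sq_nonneg (α - Real.sqrt N * r / 2)]
  calc Real.exp (α * (ρ x - ρ z) * Real.sqrt N) * (N * Real.exp (-(N * r ^ 2) / 2))
      = N * Real.exp (α * (ρ x - ρ z) * Real.sqrt N + -(N * r ^ 2) / 2) := by
        rw [Real.exp_add]; ring
    _ ≤ N * Real.exp (α ^ 2 + -(N * r ^ 2) / 4) :=
        mul_le_mul_of_nonneg_left (Real.exp_le_exp.mpr (by linarith)) hN0
    _ = Real.exp (α ^ 2) * N * Real.exp (-(N * r ^ 2) / 4) := by
        rw [Real.exp_add]; ring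

lemma kernel_bound_diff {N : ℝ} (hN : 1 ≤ N) {ρ : ℂ → ℝ} (hρ : LipschitzWith 1 ρ)
    {α : ℝ} (hα : 0 ≤ α) (x z : ℂ) :
    ‖((Real.exp (α * (ρ x - ρ z) * Real.sqrt N) - 1 : ℝ) : ℂ) * bargmannKernel N x z‖
      ≤ α * Real.exp (α ^ 2) * (2 * N * Real.exp (-(N * ‖x - z‖ ^ 2) / 8)) := by
  have hN0 : (0:ℝ) ≤ N := by linarith
  have hsN : Real.sqrt N ^ 2 = N := Real.sq_sqrt hN0
  have hsN0 : (0:ℝ) ≤ Real.sqrt N := Real.sqrt_nonneg N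
  set r := ‖x - z‖ with hr
  have hr0 : (0:ℝ) ≤ r := norm_nonneg _
  have hlip : |ρ x - ρ z| ≤ r := lip_abs_le hρ x z
  rw [norm_mul, Complex.norm_real, Real.norm_eq_abs, norm_bargmannKernel hN0, ← hr]
  set t := α * (ρ x - ρ z) * Real.sqrt N with htdef
  set s := α * Real.sqrt N * r with hsdef
  have hs0 : 0 ≤ s := by positivity
  have hts : |t| ≤ s := by
    rw [htdef, hsdef, abs_mul, abs_mul, abs_of_nonneg hα, abs_of_nonneg hsN0]
    calc α * |ρ x - ρ z| * Real.sqrt N ≤ α * r * Real.sqrt N :=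
          mul_le_mul_of_nonneg_right (mul_le_mul_of_nonneg_left hlip hα) hsN0
      _ = α * Real.sqrt N * r := by ring
  have h1 : |Real.exp t - 1| ≤ s * Real.exp s := by
    calc |Real.exp t - 1| ≤ |t| * Real.exp |t| := abs_exp_sub_one_le' t
      _ ≤ s * Real.exp s :=
        mul_le_mul hts (Real.exp_le_exp.mpr hts) (Real.exp_nonneg _) hs0
  have hskey : s + -(N * r ^ 2) / 2 ≤ α ^ 2 + -(N * r ^ 2) / 4 := by
    rw [hsdef]
    nlinarith [sq_nonneg (α - Real.sqrt N * r / 2)]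
  have hu : Real.sqrt N * r * Real.exp (-(N * r ^ 2) / 8) ≤ 2 := by
    set u := Real.sqrt N * r with hudef
    have hu0 : 0 ≤ u := by positivity
    have huu : u ^ 2 = N * r ^ 2 := by rw [hudef]; nlinarith
    have hle : u ≤ 2 * Real.exp (u ^ 2 / 8) :=
      by nlinarith [Real.add_one_le_exp (u ^ 2 / 8), sq_nonneg (u - 2), Real.exp_pos (u ^ 2 / 8)]
    have hinv : Real.exp (-(N * r ^ 2) / 8) * Real.exp (u ^ 2 / 8) = 1 := by
      rw [← Real.exp_add, huu]
      have : -(N * r ^ 2) / 8 + N * r ^ 2 / 8 = 0 := by ring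
      rw [this, Real.exp_zero]
    nlinarith [Real.exp_pos (u ^ 2 / 8), Real.exp_pos (-(N * r ^ 2) / 8)]
  have hsplit : Real.exp (-(N * r ^ 2) / 4)
      = Real.exp (-(N * r ^ 2) / 8) * Real.exp (-(N * r ^ 2) / 8) := by
    rw [← Real.exp_add]; congr 1; ring
  calc |Real.exp t - 1| * (N * Real.exp (-(N * r ^ 2) / 2))
      ≤ s * Real.exp s * (N * Real.exp (-(N * r ^ 2) / 2)) :=
        mul_le_mul_of_nonneg_right h1 (by positivity)
    _ = N * α * (Real.sqrt N * r) * Real.exp (s + -(N * r ^ 2) / 2) := by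
        rw [Real.exp_add, hsdef]; ring
    _ ≤ N * α * (Real.sqrt N * r) * Real.exp (α ^ 2 + -(N * r ^ 2) / 4) :=
        mul_le_mul_of_nonneg_left (Real.exp_le_exp.mpr hskey) (by positivity)
    _ = α * Real.exp (α ^ 2) * (N * (Real.sqrt N * r * Real.exp (-(N * r ^ 2) / 4))) := by
        rw [Real.exp_add]; ring
    _ ≤ α * Real.exp (α ^ 2) * (N * (2 * Real.exp (-(N * r ^ 2) / 8))) := by
        refine mul_le_mul_of_nonneg_left (mul_le_mul_of_nonneg_left ?_ hN0)
          (mul_nonneg hα (Real.exp_nonneg _))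
        calc Real.sqrt N * r * Real.exp (-(N * r ^ 2) / 4)
            = Real.sqrt N * r * Real.exp (-(N * r ^ 2) / 8) * Real.exp (-(N * r ^ 2) / 8) := by
              rw [hsplit]; ring
          _ ≤ 2 * Real.exp (-(N * r ^ 2) / 8) :=
              mul_le_mul_of_nonneg_right hu (Real.exp_nonneg _)
    _ = α * Real.exp (α ^ 2) * (2 * N * Real.exp (-(N * r ^ 2) / 8)) := by ring


lemma schur_bound {N : ℝ} (hN : 1 ≤ N) (ρ : ℂ → ℝ) (hρ : LipschitzWith 1 ρ) (α : ℝ) (hα : 0 ≤ α)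
    (u : ℂ → ℂ) (hu : MemLp u 2 gammaMeasure) :
    eLpNorm (fun x : ℂ => ∫ z : ℂ,
        ((Real.exp (α * (ρ x - ρ z) * Real.sqrt N) - 1 : ℝ) : ℂ)
          * bargmannKernel N x z * u z ∂gammaMeasure) 2 gammaMeasure
      ≤ ENNReal.ofReal (16 * α * Real.exp (α ^ 2)) * eLpNorm u 2 gammaMeasure := by
  classical
  have hsf : SFinite gammaMeasure := by unfold gammaMeasure; infer_instance
  set γ := gammaMeasure with hγ
  set c : ℝ≥0∞ := ENNReal.ofReal (α * Real.exp (α ^ 2)) with hc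
  have hc_ne_top : c ≠ ∞ := ENNReal.ofReal_ne_top
  set g : ℂ → ℂ → ℝ≥0∞ :=
    fun x z => ENNReal.ofReal (2 * N * Real.exp (-(N * ‖x - z‖ ^ 2) / 8)) with hgdef
  set K : ℂ → ℂ → ℂ :=
    fun x z => ((Real.exp (α * (ρ x - ρ z) * Real.sqrt N) - 1 : ℝ) : ℂ) * bargmannKernel N x z
    with hKdef
  -- measurability of g
  have hg_meas : Measurable (fun p : ℂ × ℂ => g p.1 p.2) := by
    apply Measurable.ennreal_ofReal
    fun_prop
  have hg_meas1 : ∀ x, Measurable (g x) := fun x => by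
    apply Measurable.ennreal_ofReal; fun_prop
  have hu_ae : AEMeasurable u γ := hu.1.aemeasurable
  have hue : AEMeasurable (fun z => (‖u z‖₊ : ℝ≥0∞)) γ := hu.1.enorm
  -- kernel bound in ennreal form
  have hKg : ∀ x z, (‖K x z‖₊ : ℝ≥0∞) ≤ c * g x z := by
    intro x z
    rw [show (‖K x z‖₊ : ℝ≥0∞) = ENNReal.ofReal ‖K x z‖ from
      (ENNReal.ofReal_eq_coe_nnreal (norm_nonneg _)).symm, hc, hgdef, ← ENNReal.ofReal_mul
      (mul_nonneg hα (Real.exp_nonneg _))]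
    exact ENNReal.ofReal_le_ofReal (kernel_bound_diff hN hρ hα x z)
  -- row and column bounds for c * g
  have hrow : ∀ x, ∫⁻ z, c * g x z ∂γ = c * ENNReal.ofReal 16 := by
    intro x
    rw [lintegral_const_mul _ (hg_meas1 x), row_bound hN x]
  have hcol : ∀ z, ∫⁻ x, g x z ∂γ = ENNReal.ofReal 16 := by
    intro z
    have : ∀ x : ℂ, g x z = g z x := by
      intro x; simp only [hgdef, norm_sub_rev]
    simp_rw [this]
    exact row_bound hN z
  -- pointwise (in x) estimate via Cauchy-Schwarz
  have hpoint : ∀ x : ℂ, (‖∫ z, K x z * u z ∂γ‖₊ : ℝ≥0∞) ^ (2:ℝ)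
      ≤ (c * ENNReal.ofReal 16) * ∫⁻ z, c * g x z * (‖u z‖₊ : ℝ≥0∞) ^ (2:ℝ) ∂γ := by
    intro x
    have step1 : (‖∫ z, K x z * u z ∂γ‖₊ : ℝ≥0∞) ≤ ∫⁻ z, ‖K x z‖₊ * ‖u z‖₊ ∂γ := by
      refine (enorm_integral_le_lintegral_enorm _).trans (le_of_eq ?_)
      congr 1; ext z; rw [enorm_mul]; rfl
    have step2 : ∫⁻ z, (‖K x z‖₊ : ℝ≥0∞) * ‖u z‖₊ ∂γ
        ≤ ∫⁻ z, ((fun z => (c * g x z) ^ (1/2:ℝ)) * fun z => (c * g x z) ^ (1/2:ℝ) * ‖u z‖₊) z ∂γ := by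
      refine lintegral_mono fun z => ?_
      simp only [Pi.mul_apply]
      calc (‖K x z‖₊ : ℝ≥0∞) * ‖u z‖₊ ≤ (c * g x z) * ‖u z‖₊ :=
            mul_le_mul_left (hKg x z) _
        _ = (c * g x z) ^ (1/2:ℝ) * ((c * g x z) ^ (1/2:ℝ) * ‖u z‖₊) := by
            rw [← mul_assoc, ← ENNReal.rpow_add_of_nonneg _ _ (by norm_num) (by norm_num)]
            norm_num
    have hf1 : AEMeasurable (fun z => (c * g x z) ^ (1/2:ℝ)) γ :=
      ((hg_meas1 x).const_mul c).aemeasurable.pow aemeasurable_const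
    have hf2 : AEMeasurable (fun z => (c * g x z) ^ (1/2:ℝ) * (‖u z‖₊ : ℝ≥0∞)) γ :=
      hf1.mul hue
    have holder := ENNReal.lintegral_mul_le_Lp_mul_Lq γ (p := 2) (q := 2)
      (by rw [Real.holderConjugate_iff]; norm_num) hf1 hf2
    have e1 : ∫⁻ z, ((c * g x z) ^ (1/2:ℝ)) ^ (2:ℝ) ∂γ = c * ENNReal.ofReal 16 := by
      rw [← hrow x]; congr 1; ext z
      rw [← ENNReal.rpow_mul]; norm_num
    have e2 : ∫⁻ z, ((c * g x z) ^ (1/2:ℝ) * (‖u z‖₊ : ℝ≥0∞)) ^ (2:ℝ) ∂γ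
        = ∫⁻ z, c * g x z * (‖u z‖₊ : ℝ≥0∞) ^ (2:ℝ) ∂γ := by
      congr 1; ext z
      rw [ENNReal.mul_rpow_of_nonneg _ _ (by norm_num : (0:ℝ) ≤ 2), ← ENNReal.rpow_mul]
      norm_num
    rw [e1, e2] at holder
    have hchain : (‖∫ z, K x z * u z ∂γ‖₊ : ℝ≥0∞)
        ≤ (c * ENNReal.ofReal 16) ^ (1/2:ℝ)
          * (∫⁻ z, c * g x z * (‖u z‖₊ : ℝ≥0∞) ^ (2:ℝ) ∂γ) ^ (1/2:ℝ) :=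
      (step1.trans step2).trans holder
    calc (‖∫ z, K x z * u z ∂γ‖₊ : ℝ≥0∞) ^ (2:ℝ)
        ≤ ((c * ENNReal.ofReal 16) ^ (1/2:ℝ)
          * (∫⁻ z, c * g x z * (‖u z‖₊ : ℝ≥0∞) ^ (2:ℝ) ∂γ) ^ (1/2:ℝ)) ^ (2:ℝ) :=
          ENNReal.rpow_le_rpow hchain (by norm_num)
      _ = (c * ENNReal.ofReal 16) * ∫⁻ z, c * g x z * (‖u z‖₊ : ℝ≥0∞) ^ (2:ℝ) ∂γ := by
          rw [ENNReal.mul_rpow_of_nonneg _ _ (by norm_num : (0:ℝ) ≤ 2),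
            ← ENNReal.rpow_mul, ← ENNReal.rpow_mul]
          norm_num
  -- now integrate in x
  set A := c * ENNReal.ofReal 16 with hA
  have hA_ne_top : A ≠ ∞ := ENNReal.mul_ne_top hc_ne_top ENNReal.ofReal_ne_top
  have humeas2 : AEMeasurable (fun p : ℂ × ℂ => c * g p.1 p.2 * (‖u p.2‖₊ : ℝ≥0∞) ^ (2:ℝ))
      (γ.prod γ) := by
    refine AEMeasurable.mul ((hg_meas.const_mul c).aemeasurable) ?_
    exact (hu_ae.comp_snd.aestronglyMeasurable.enorm).pow aemeasurable_const
  have hswap : ∫⁻ x, ∫⁻ z, c * g x z * (‖u z‖₊ : ℝ≥0∞) ^ (2:ℝ) ∂γ ∂γ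
      = ∫⁻ z, ∫⁻ x, c * g x z * (‖u z‖₊ : ℝ≥0∞) ^ (2:ℝ) ∂γ ∂γ :=
    lintegral_lintegral_swap humeas2
  have hinner : ∀ z : ℂ, ∫⁻ x, c * g x z * (‖u z‖₊ : ℝ≥0∞) ^ (2:ℝ) ∂γ
      = A * (‖u z‖₊ : ℝ≥0∞) ^ (2:ℝ) := by
    intro z
    have hWne : c * (‖u z‖₊ : ℝ≥0∞) ^ (2:ℝ) ≠ ∞ :=
      ENNReal.mul_ne_top hc_ne_top
        (ENNReal.rpow_ne_top_of_nonneg (by norm_num) ENNReal.coe_ne_top)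
    calc ∫⁻ x, c * g x z * (‖u z‖₊ : ℝ≥0∞) ^ (2:ℝ) ∂γ
        = ∫⁻ x, (c * (‖u z‖₊ : ℝ≥0∞) ^ (2:ℝ)) * g x z ∂γ := by
          congr 1; ext x; ring
      _ = (c * (‖u z‖₊ : ℝ≥0∞) ^ (2:ℝ)) * ∫⁻ x, g x z ∂γ :=
          lintegral_const_mul' _ _ hWne
      _ = A * (‖u z‖₊ : ℝ≥0∞) ^ (2:ℝ) := by rw [hcol z, hA]; ring
  have htotal : ∫⁻ x, (‖∫ z, K x z * u z ∂γ‖₊ : ℝ≥0∞) ^ (2:ℝ) ∂γ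
      ≤ A * A * ∫⁻ z, (‖u z‖₊ : ℝ≥0∞) ^ (2:ℝ) ∂γ := by
    calc ∫⁻ x, (‖∫ z, K x z * u z ∂γ‖₊ : ℝ≥0∞) ^ (2:ℝ) ∂γ
        ≤ ∫⁻ x, A * ∫⁻ z, c * g x z * (‖u z‖₊ : ℝ≥0∞) ^ (2:ℝ) ∂γ ∂γ :=
          lintegral_mono hpoint
      _ = A * ∫⁻ x, ∫⁻ z, c * g x z * (‖u z‖₊ : ℝ≥0∞) ^ (2:ℝ) ∂γ ∂γ :=
          lintegral_const_mul' _ _ hA_ne_top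
      _ = A * ∫⁻ z, A * (‖u z‖₊ : ℝ≥0∞) ^ (2:ℝ) ∂γ := by rw [hswap]; simp_rw [hinner]
      _ = A * (A * ∫⁻ z, (‖u z‖₊ : ℝ≥0∞) ^ (2:ℝ) ∂γ) := by
          rw [lintegral_const_mul' _ _ hA_ne_top]
      _ = A * A * ∫⁻ z, (‖u z‖₊ : ℝ≥0∞) ^ (2:ℝ) ∂γ := by ring
  -- conclude
  have h2ne0 : (2 : ℝ≥0∞) ≠ 0 := by norm_num
  have h2net : (2 : ℝ≥0∞) ≠ ∞ := by norm_num
  rw [eLpNorm_eq_lintegral_rpow_enorm_toReal h2ne0 h2net, eLpNorm_eq_lintegral_rpow_enorm_toReal h2ne0 h2net]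
  simp only [ENNReal.toReal_ofNat]
  have hAA : (A * A) ^ (1/2:ℝ) = A := by
    rw [← sq, ← ENNReal.rpow_natCast A 2, ← ENNReal.rpow_mul]
    norm_num
  calc (∫⁻ x, (‖∫ z, K x z * u z ∂γ‖₊ : ℝ≥0∞) ^ (2:ℝ) ∂γ) ^ (1/2:ℝ)
      ≤ (A * A * ∫⁻ z, (‖u z‖₊ : ℝ≥0∞) ^ (2:ℝ) ∂γ) ^ (1/2:ℝ) :=
        ENNReal.rpow_le_rpow htotal (by norm_num)
    _ = A * (∫⁻ z, (‖u z‖₊ : ℝ≥0∞) ^ (2:ℝ) ∂γ) ^ (1/2:ℝ) := by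
        rw [ENNReal.mul_rpow_of_nonneg _ _ (by norm_num : (0:ℝ) ≤ 1/2), hAA]
    _ = ENNReal.ofReal (16 * α * Real.exp (α ^ 2))
          * (∫⁻ z, (‖u z‖₊ : ℝ≥0∞) ^ (2:ℝ) ∂γ) ^ (1/2:ℝ) := by
        congr 1
        rw [hA, hc, ← ENNReal.ofReal_mul (mul_nonneg hα (Real.exp_nonneg _))]
        congr 1; ring

/-- For a 1-Lipschitz `ρ : ℂ → ℝ`, `α ≥ 0` and `ε = N^{-1/2}`, the conjugated
Bargmann projection `P_N^α = e^{αρ/ε} P_N e^{-αρ/ε}` (with kernel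
`e^{α(ρ(x)−ρ(z))/ε} P_N(x,z)`) satisfies the kernel bound
`|P_N^α(x,z)| ≤ e^{α²} N e^{-N|x−z|²/4}` and the operator-norm bound
`‖P_N^α − P_N‖ ≤ C α e^{α²}` for a universal constant `C` (the latter expressed by the
`L²(γ)` bound over all `u ∈ L²(γ)`). -/
theorem conjugated_bargmann_bounds :
    ∃ C : ℝ, 0 < C ∧ ∀ (N : ℝ), 1 ≤ N → ∀ (ρ : ℂ → ℝ), LipschitzWith 1 ρ →
      ∀ (α : ℝ), 0 ≤ α →
      (∀ x z : ℂ,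
          ‖(Real.exp (α * (ρ x - ρ z) * Real.sqrt N) : ℂ) * bargmannKernel N x z‖
            ≤ Real.exp (α ^ 2) * N * Real.exp (-(N * ‖x - z‖ ^ 2) / 4))
      ∧ ∀ u : ℂ → ℂ, MemLp u 2 gammaMeasure →
          eLpNorm (fun x : ℂ => ∫ z : ℂ,
              ((Real.exp (α * (ρ x - ρ z) * Real.sqrt N) - 1 : ℝ) : ℂ)
                * bargmannKernel N x z * u z ∂gammaMeasure) 2 gammaMeasure
            ≤ ENNReal.ofReal (C * α * Real.exp (α ^ 2)) * eLpNorm u 2 gammaMeasure := by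
  refine ⟨16, by norm_num, fun N hN ρ hρ α hα => ⟨fun x z => kernel_bound_one hN hρ hα x z,
    fun u hu => schur_bound hN ρ hρ α hα u hu⟩⟩
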